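/- (Shuster's chi-squared transformation of the inverse Gaussian distribution) Let λ, μ > 0 and let X be a random variable with the inverse Gaussian IG(λ,μ) density f(x) = √(λ/(2π x³)) · exp(−λ(x−μ)²/(2μ²x)) on (0,∞). Then Y = λ(X−μ)²/(μ²X) follows the chi-squared distribution with one degree of freedom; that is, the pushforward of the IG(λ,μ) measure under x ↦ λ(x−μ)²/(μ²x) is the Gamma(1/2, 1/2) distribution, with density y ↦ (2πy)^(−1/2) e^(−y/2) on (0,∞). -/

import Mathlib

open MeasureTheory ProbabilityTheory Set

namespace ShusterAux

noncomputable def q (lam mu y : ℝ) : ℝ := mu*y*(mu*y+4*lam)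
noncomputable def hp (lam mu y : ℝ) : ℝ :=
  (mu*(2*lam+mu*y) + mu*Real.sqrt (q lam mu y))/(2*lam)
noncomputable def hm (lam mu y : ℝ) : ℝ :=
  (mu*(2*lam+mu*y) - mu*Real.sqrt (q lam mu y))/(2*lam)
noncomputable def dp (lam mu y : ℝ) : ℝ :=
  mu^2*(Real.sqrt (q lam mu y) + (mu*y+2*lam))/(2*lam*Real.sqrt (q lam mu y))
noncomputable def dm (lam mu y : ℝ) : ℝ :=
  mu^2*(Real.sqrt (q lam mu y) - (mu*y+2*lam))/(2*lam*Real.sqrt (q lam mu y))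

variable {lam mu y x : ℝ}

lemma q_pos (hlam : 0 < lam) (hmu : 0 < mu) (hy : 0 < y) : 0 < q lam mu y := by
  unfold q; positivity

lemma sq_sqrt_q (hlam : 0 < lam) (hmu : 0 < mu) (hy : 0 < y) :
    (Real.sqrt (q lam mu y))^2 = mu*y*(mu*y+4*lam) :=
  Real.sq_sqrt (q_pos hlam hmu hy).le

lemma sqrt_q_pos (hlam : 0 < lam) (hmu : 0 < mu) (hy : 0 < y) :
    0 < Real.sqrt (q lam mu y) := Real.sqrt_pos.2 (q_pos hlam hmu hy)

lemma sqrt_q_lt (hlam : 0 < lam) (hmu : 0 < mu) (hy : 0 < y) :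
    Real.sqrt (q lam mu y) < mu*y+2*lam := by
  rw [show mu*y+2*lam = Real.sqrt ((mu*y+2*lam)^2) from
    (Real.sqrt_sq (by positivity)).symm]
  apply Real.sqrt_lt_sqrt (q_pos hlam hmu hy).le
  unfold q; nlinarith [mul_pos hmu hy]

lemma lt_sqrt_q (hlam : 0 < lam) (hmu : 0 < mu) (hy : 0 < y) :
    mu*y < Real.sqrt (q lam mu y) := by
  rw [show mu*y = Real.sqrt ((mu*y)^2) from (Real.sqrt_sq (by positivity)).symm]
  apply Real.sqrt_lt_sqrt (by positivity)
  unfold q; nlinarith [mul_pos hmu hy]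

lemma hm_pos (hlam : 0 < lam) (hmu : 0 < mu) (hy : 0 < y) : 0 < hm lam mu y := by
  have h1 := sqrt_q_lt hlam hmu hy
  unfold hm
  have h2 : mu * Real.sqrt (q lam mu y) < mu*(2*lam+mu*y) := by nlinarith
  have : 0 < mu*(2*lam+mu*y) - mu * Real.sqrt (q lam mu y) := by linarith
  positivity

lemma hm_lt (hlam : 0 < lam) (hmu : 0 < mu) (hy : 0 < y) : hm lam mu y < mu := by
  have h1 := lt_sqrt_q hlam hmu hy
  unfold hm
  rw [div_lt_iff₀ (by positivity)]
  nlinarith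

lemma hp_gt (hlam : 0 < lam) (hmu : 0 < mu) (hy : 0 < y) : mu < hp lam mu y := by
  have h1 := sqrt_q_pos hlam hmu hy
  unfold hp
  rw [lt_div_iff₀ (by positivity)]
  nlinarith [mul_pos hmu hy]

lemma hp_pos (hlam : 0 < lam) (hmu : 0 < mu) (hy : 0 < y) : 0 < hp lam mu y :=
  hmu.trans (hp_gt hlam hmu hy)

lemma hm_mul_hp (hlam : 0 < lam) (hmu : 0 < mu) (hy : 0 < y) :
    hm lam mu y * hp lam mu y = mu^2 := by
  have h2 := sq_sqrt_q hlam hmu hy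
  unfold hm hp
  field_simp
  nlinarith [h2]

lemma g_hp (hlam : 0 < lam) (hmu : 0 < mu) (hy : 0 < y) :
    lam * (hp lam mu y - mu)^2 / (mu^2 * hp lam mu y) = y := by
  have h2 := sq_sqrt_q hlam hmu hy
  have h0 := hp_pos hlam hmu hy
  rw [div_eq_iff (by positivity)]
  unfold hp at *
  field_simp at *
  linear_combination h2

lemma g_hm (hlam : 0 < lam) (hmu : 0 < mu) (hy : 0 < y) :
    lam * (hm lam mu y - mu)^2 / (mu^2 * hm lam mu y) = y := by
  have h2 := sq_sqrt_q hlam hmu hy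
  have h0 := hm_pos hlam hmu hy
  rw [div_eq_iff (by positivity)]
  unfold hm at *
  field_simp at *
  linear_combination h2

lemma sqrt_q_g_of_gt (hlam : 0 < lam) (hmu : 0 < mu) (hx : mu < x) :
    Real.sqrt (q lam mu (lam*(x-mu)^2/(mu^2*x))) = lam*(x^2-mu^2)/(mu*x) := by
  have hx0 : 0 < x := hmu.trans hx
  have h : q lam mu (lam*(x-mu)^2/(mu^2*x)) = (lam*(x^2-mu^2)/(mu*x))^2 := by
    unfold q; field_simp; ring
  have h2 : 0 ≤ x^2 - mu^2 := by nlinarith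
  rw [h, Real.sqrt_sq (by positivity)]

lemma hp_g (hlam : 0 < lam) (hmu : 0 < mu) (hx : mu < x) :
    hp lam mu (lam*(x-mu)^2/(mu^2*x)) = x := by
  have hx0 : 0 < x := hmu.trans hx
  unfold hp
  rw [sqrt_q_g_of_gt hlam hmu hx]
  field_simp
  ring

lemma sqrt_q_g_of_lt (hlam : 0 < lam) (hmu : 0 < mu) (hx0 : 0 < x) (hx : x < mu) :
    Real.sqrt (q lam mu (lam*(x-mu)^2/(mu^2*x))) = lam*(mu^2-x^2)/(mu*x) := by
  have h : q lam mu (lam*(x-mu)^2/(mu^2*x)) = (lam*(mu^2-x^2)/(mu*x))^2 := by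
    unfold q; field_simp; ring
  have h2 : 0 ≤ mu^2 - x^2 := by nlinarith
  rw [h, Real.sqrt_sq (by positivity)]

lemma hm_g (hlam : 0 < lam) (hmu : 0 < mu) (hx0 : 0 < x) (hx : x < mu) :
    hm lam mu (lam*(x-mu)^2/(mu^2*x)) = x := by
  unfold hm
  rw [sqrt_q_g_of_lt hlam hmu hx0 hx]
  field_simp
  ring

lemma hasDerivAt_q : HasDerivAt (fun t => q lam mu t) (2*mu^2*y+4*lam*mu) y := by
  have h := (((hasDerivAt_id y).const_mul mu).mul
    (((hasDerivAt_id y).const_mul mu).add_const (4*lam)))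
  unfold q
  refine h.congr_deriv ?_
  simp only [id_eq]
  ring

lemma hasDerivAt_sqrt_q (hlam : 0 < lam) (hmu : 0 < mu) (hy : 0 < y) :
    HasDerivAt (fun t => Real.sqrt (q lam mu t))
      ((2*mu^2*y+4*lam*mu)/(2*Real.sqrt (q lam mu y))) y :=
  hasDerivAt_q.sqrt (q_pos hlam hmu hy).ne'

lemma hasDerivAt_hp (hlam : 0 < lam) (hmu : 0 < mu) (hy : 0 < y) :
    HasDerivAt (hp lam mu) (dp lam mu y) y := by
  have hd0 : 0 < Real.sqrt (q lam mu y) := sqrt_q_pos hlam hmu hy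
  have h : HasDerivAt (hp lam mu)
      ((mu*mu + mu*((2*mu^2*y+4*lam*mu)/(2*Real.sqrt (q lam mu y))))/(2*lam)) y := by
    have h0 := ((((hasDerivAt_id y).const_mul mu).const_add (2*lam)).const_mul mu |>.add
      ((hasDerivAt_sqrt_q hlam hmu hy).const_mul mu)).div_const (2*lam)
    simp only [id_eq, mul_one] at h0
    unfold hp
    exact h0
  convert h using 1
  unfold dp
  field_simp
  ring

lemma hasDerivAt_hm (hlam : 0 < lam) (hmu : 0 < mu) (hy : 0 < y) :
    HasDerivAt (hm lam mu) (dm lam mu y) y := by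
  have hd0 : 0 < Real.sqrt (q lam mu y) := sqrt_q_pos hlam hmu hy
  have h : HasDerivAt (hm lam mu)
      ((mu*mu - mu*((2*mu^2*y+4*lam*mu)/(2*Real.sqrt (q lam mu y))))/(2*lam)) y := by
    have h0 := ((((hasDerivAt_id y).const_mul mu).const_add (2*lam)).const_mul mu |>.sub
      ((hasDerivAt_sqrt_q hlam hmu hy).const_mul mu)).div_const (2*lam)
    simp only [id_eq, mul_one] at h0
    unfold hm
    exact h0
  convert h using 1
  unfold dm
  field_simp
  ring

lemma term_p (hlam : 0 < lam) (hmu : 0 < mu) (hy : 0 < y) :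
    Real.sqrt (lam/(2*Real.pi*(hp lam mu y)^3)) * |dp lam mu y|
      = Real.sqrt (lam*mu^2/(2*Real.pi*(q lam mu y)) / hp lam mu y) := by
  have hp0 := hp_pos hlam hmu hy
  have hd0 := sqrt_q_pos hlam hmu hy
  rw [← Real.sqrt_sq_eq_abs, ← Real.sqrt_mul (by positivity)]
  congr 1
  rw [show q lam mu y = (Real.sqrt (q lam mu y))^2 from
    (Real.sq_sqrt (q_pos hlam hmu hy).le).symm]
  have hne : mu*(2*lam+mu*y) + mu*Real.sqrt (q lam mu y) ≠ 0 := by positivity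
  unfold dp hp at *
  field_simp
  ring

lemma term_m (hlam : 0 < lam) (hmu : 0 < mu) (hy : 0 < y) :
    Real.sqrt (lam/(2*Real.pi*(hm lam mu y)^3)) * |dm lam mu y|
      = Real.sqrt (lam*mu^2/(2*Real.pi*(q lam mu y)) / hm lam mu y) := by
  have hm0 := hm_pos hlam hmu hy
  have hd0 := sqrt_q_pos hlam hmu hy
  have h1 := sqrt_q_lt hlam hmu hy
  rw [← Real.sqrt_sq_eq_abs, ← Real.sqrt_mul (by positivity)]
  congr 1
  rw [show q lam mu y = (Real.sqrt (q lam mu y))^2 from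
    (Real.sq_sqrt (q_pos hlam hmu hy).le).symm]
  have hne : mu*(2*lam+mu*y) - mu*Real.sqrt (q lam mu y) ≠ 0 := by nlinarith
  unfold dm hm at *
  have hne2 : 2*lam+mu*y - Real.sqrt (q lam mu y) ≠ 0 := by linarith
  rw [show mu * (2 * lam + mu * y) - mu * √(q lam mu y) = mu * (2*lam+mu*y - Real.sqrt (q lam mu y)) by ring]
  rw [show √(q lam mu y) - (mu * y + 2 * lam) = -(2*lam+mu*y - Real.sqrt (q lam mu y)) by ring]
  generalize 2*lam+mu*y - Real.sqrt (q lam mu y) = D at *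
  field_simp

lemma sum_sqrt (hlam : 0 < lam) (hmu : 0 < mu) (hy : 0 < y) :
    Real.sqrt (lam*mu^2/(2*Real.pi*(q lam mu y)) / hm lam mu y)
      + Real.sqrt (lam*mu^2/(2*Real.pi*(q lam mu y)) / hp lam mu y)
      = Real.sqrt (1/(2*Real.pi*y)) := by
  have hm0 := hm_pos hlam hmu hy
  have hp0 := hp_pos hlam hmu hy
  have hq0 := q_pos hlam hmu hy
  set B := lam*mu^2/(2*Real.pi*(q lam mu y)) with hB
  have hB0 : 0 ≤ B := by rw [hB]; positivity
  have key : (Real.sqrt (B/hm lam mu y) + Real.sqrt (B/hp lam mu y))^2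
      = 1/(2*Real.pi*y) := by
    rw [add_sq, Real.sq_sqrt (by positivity), Real.sq_sqrt (by positivity),
      mul_assoc, ← Real.sqrt_mul (by positivity)]
    rw [show B/hm lam mu y*(B/hp lam mu y) = (B/mu)^2 by
      rw [div_mul_div_comm, hm_mul_hp hlam hmu hy, div_pow]; ring_nf]
    rw [Real.sqrt_sq (by positivity)]
    have hsum : B/hm lam mu y + B/hp lam mu y = B*(hm lam mu y + hp lam mu y)/mu^2 := by
      rw [div_add_div _ _ hm0.ne' hp0.ne', hm_mul_hp hlam hmu hy]
      ring
    rw [show B/hm lam mu y + 2*(B/mu) + B/hp lam mu y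
        = B*(hm lam mu y + hp lam mu y)/mu^2 + 2*(B/mu) by rw [← hsum]; ring]
    rw [hB]
    unfold hm hp q
    field_simp
    ring
  calc Real.sqrt (B/hm lam mu y) + Real.sqrt (B/hp lam mu y)
      = Real.sqrt ((Real.sqrt (B/hm lam mu y) + Real.sqrt (B/hp lam mu y))^2) :=
        (Real.sqrt_sq (by positivity)).symm
    _ = Real.sqrt (1/(2*Real.pi*y)) := by rw [key]

lemma gammaPDFReal_half (hy : 0 < y) :
    gammaPDFReal (1/2) (1/2) y = Real.sqrt (1/(2*Real.pi*y)) * Real.exp (-(y/2)) := by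
  unfold gammaPDFReal
  rw [if_pos hy.le, Real.Gamma_one_half_eq]
  rw [show ((1:ℝ)/2 - 1) = -(1/2) by norm_num, Real.rpow_neg hy.le]
  rw [show ((1:ℝ)/2)^((1:ℝ)/2) = Real.sqrt (1/2) from (Real.sqrt_eq_rpow _).symm]
  rw [show y^((1:ℝ)/2) = Real.sqrt y from (Real.sqrt_eq_rpow _).symm]
  rw [show (1:ℝ)/(2*Real.pi*y) = (1/2)*(Real.pi⁻¹*y⁻¹) by
    field_simp]
  rw [Real.sqrt_mul (by norm_num), Real.sqrt_mul (by positivity), Real.sqrt_inv,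
    Real.sqrt_inv]
  rw [show -(1/2*y) = -(y/2) by ring]
  have hpi : (0:ℝ) < Real.sqrt Real.pi := Real.sqrt_pos.2 Real.pi_pos
  field_simp

lemma exp_arg_m (hlam : 0 < lam) (hmu : 0 < mu) (hy : 0 < y) :
    -(lam * (hm lam mu y - mu)^2) / (2 * mu^2 * hm lam mu y) = -(y/2) := by
  have h0 := hm_pos hlam hmu hy
  have h := g_hm hlam hmu hy
  rw [div_eq_iff (by positivity)] at h
  rw [neg_div, h]
  field_simp

lemma exp_arg_p (hlam : 0 < lam) (hmu : 0 < mu) (hy : 0 < y) :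
    -(lam * (hp lam mu y - mu)^2) / (2 * mu^2 * hp lam mu y) = -(y/2) := by
  have h0 := hp_pos hlam hmu hy
  have h := g_hp hlam hmu hy
  rw [div_eq_iff (by positivity)] at h
  rw [neg_div, h]
  field_simp

lemma density_identity (hlam : 0 < lam) (hmu : 0 < mu) (hy : 0 < y) :
    |dm lam mu y| * (Real.sqrt (lam/(2*Real.pi*(hm lam mu y)^3)) *
        Real.exp (-(lam*(hm lam mu y - mu)^2) / (2*mu^2*(hm lam mu y))))
      + |dp lam mu y| * (Real.sqrt (lam/(2*Real.pi*(hp lam mu y)^3)) *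
        Real.exp (-(lam*(hp lam mu y - mu)^2) / (2*mu^2*(hp lam mu y))))
      = gammaPDFReal (1/2) (1/2) y := by
  rw [show (2*mu^2*(hm lam mu y)) = (2 * mu^2 * hm lam mu y) by ring,
    show (2*mu^2*(hp lam mu y)) = (2 * mu^2 * hp lam mu y) by ring,
    exp_arg_m hlam hmu hy, exp_arg_p hlam hmu hy, gammaPDFReal_half hy]
  rw [show |dm lam mu y| * (Real.sqrt (lam/(2*Real.pi*(hm lam mu y)^3)) *
        Real.exp (-(y/2)))
      + |dp lam mu y| * (Real.sqrt (lam/(2*Real.pi*(hp lam mu y)^3)) *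
        Real.exp (-(y/2)))
      = (Real.sqrt (lam/(2*Real.pi*(hm lam mu y)^3)) * |dm lam mu y|
        + Real.sqrt (lam/(2*Real.pi*(hp lam mu y)^3)) * |dp lam mu y|)
        * Real.exp (-(y/2)) from by ring,
    term_m hlam hmu hy, term_p hlam hmu hy, sum_sqrt hlam hmu hy]

lemma lintegral_image_eq_lintegral_abs_deriv_mul {s : Set ℝ} {f f' : ℝ → ℝ}
    (hs : MeasurableSet s) (hf' : ∀ x ∈ s, HasDerivWithinAt f (f' x) s x)
    (hf : Set.InjOn f s) (g : ℝ → ENNReal) :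
    ∫⁻ x in f '' s, g x = ∫⁻ x in s, ENNReal.ofReal |f' x| * g (f x) := by
  simpa only [ContinuousLinearMap.det_toSpanSingleton] using
    MeasureTheory.lintegral_image_eq_lintegral_abs_det_fderiv_mul volume hs
      (fun x hx => (hf' x hx).hasFDerivWithinAt) hf g

end ShusterAux

open ShusterAux

/-- Shuster's chi-squared transformation of the inverse Gaussian distribution: if `X`
has the inverse Gaussian `IG(λ,μ)` law, with density
`x ↦ √(λ/(2πx³))·exp(−λ(x−μ)²/(2μ²x))` on `(0,∞)`, then `Y = λ(X−μ)²/(μ²X)` is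
chi-squared with one degree of freedom, i.e., the pushforward of the `IG(λ,μ)` measure
under `x ↦ λ(x−μ)²/(μ²x)` is the `Gamma(1/2, 1/2)` distribution. -/
theorem stmt_7 (lam mu : ℝ) (hlam : 0 < lam) (hmu : 0 < mu) :
    Measure.map (fun x : ℝ => lam * (x - mu) ^ 2 / (mu ^ 2 * x))
      (volume.withDensity (fun x => ENNReal.ofReal
        (Set.indicator (Ioi (0:ℝ))
          (fun x => Real.sqrt (lam / (2 * Real.pi * x ^ 3)) *
            Real.exp (-(lam * (x - mu) ^ 2) / (2 * mu ^ 2 * x))) x))) =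
      gammaMeasure (1 / 2) (1 / 2) := by
  have hg : Measurable (fun x : ℝ => lam * (x - mu) ^ 2 / (mu ^ 2 * x)) := by
    fun_prop
  refine Measure.ext fun s hs => ?_
  rw [Measure.map_apply hg hs, withDensity_apply _ (hg hs), gammaMeasure,
    withDensity_apply _ hs]
  set φ : ℝ → ℝ := fun x => Real.sqrt (lam / (2 * Real.pi * x ^ 3)) *
    Real.exp (-(lam * (x - mu) ^ 2) / (2 * mu ^ 2 * x)) with hφ
  set A : Set ℝ := (fun x : ℝ => lam * (x - mu) ^ 2 / (mu ^ 2 * x)) ⁻¹' s with hA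
  have hAs : MeasurableSet A := hg hs
  have hind : ∀ x:ℝ, ENNReal.ofReal ((Ioi (0:ℝ)).indicator φ x)
      = (Ioi (0:ℝ)).indicator (fun x => ENNReal.ofReal (φ x)) x := by
    intro x
    by_cases hx : x ∈ Ioi (0:ℝ) <;> simp [Set.indicator_apply, hx]
  rw [lintegral_congr hind, lintegral_indicator measurableSet_Ioi _,
    Measure.restrict_restrict measurableSet_Ioi]
  -- image identities
  have himm : hm lam mu '' (s ∩ Ioi 0) = A ∩ Ioo 0 mu := by
    ext x
    constructor
    · rintro ⟨y, ⟨hys, hy0⟩, rfl⟩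
      have hy0' : (0:ℝ) < y := hy0
      refine ⟨?_, hm_pos hlam hmu hy0', hm_lt hlam hmu hy0'⟩
      show lam * (hm lam mu y - mu) ^ 2 / (mu ^ 2 * hm lam mu y) ∈ s
      rw [g_hm hlam hmu hy0']
      exact hys
    · rintro ⟨hxA, hx0, hxmu⟩
      have hgx : (0:ℝ) < lam * (x - mu) ^ 2 / (mu ^ 2 * x) := by
        have : x - mu ≠ 0 := by intro h; rw [sub_eq_zero] at h; exact absurd h (ne_of_lt hxmu)
        positivity
      exact ⟨lam * (x - mu) ^ 2 / (mu ^ 2 * x), ⟨hxA, hgx⟩, hm_g hlam hmu hx0 hxmu⟩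
  have himp : hp lam mu '' (s ∩ Ioi 0) = A ∩ Ioi mu := by
    ext x
    constructor
    · rintro ⟨y, ⟨hys, hy0⟩, rfl⟩
      have hy0' : (0:ℝ) < y := hy0
      refine ⟨?_, hp_gt hlam hmu hy0'⟩
      show lam * (hp lam mu y - mu) ^ 2 / (mu ^ 2 * hp lam mu y) ∈ s
      rw [g_hp hlam hmu hy0']
      exact hys
    · rintro ⟨hxA, hxmu⟩
      have hx0 : (0:ℝ) < x := hmu.trans hxmu
      have hgx : (0:ℝ) < lam * (x - mu) ^ 2 / (mu ^ 2 * x) := by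
        have : x - mu ≠ 0 := by intro h; rw [sub_eq_zero] at h; exact absurd h.symm (ne_of_lt hxmu)
        positivity
      exact ⟨lam * (x - mu) ^ 2 / (mu ^ 2 * x), ⟨hxA, hgx⟩, hp_g hlam hmu hxmu⟩
  -- split the domain
  have hsplit : (Ioi (0:ℝ) ∩ A : Set ℝ) =ᵐ[volume] ((A ∩ Ioo 0 mu) ∪ (A ∩ Ioi mu) : Set ℝ) := by
    rw [MeasureTheory.ae_eq_set]
    constructor
    · refine measure_mono_null (fun x hx => ?_) (Real.volume_singleton (a := mu))
      obtain ⟨⟨hx0, hxA⟩, hxn⟩ := hx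
      have h1 : x ∉ A ∩ Ioo 0 mu := fun c => hxn (Or.inl c)
      have h2 : x ∉ A ∩ Ioi mu := fun c => hxn (Or.inr c)
      rcases lt_trichotomy x mu with h | h | h
      · exact absurd ⟨hxA, Set.mem_Ioi.1 hx0, h⟩ h1
      · exact h
      · exact absurd ⟨hxA, h⟩ h2
    · refine measure_mono_null (fun x hx => ?_) (measure_empty (μ := volume))
      obtain ⟨hxU, hxn⟩ := hx
      exfalso
      apply hxn
      rcases hxU with ⟨hxA, hx0, _⟩ | ⟨hxA, hxmu⟩
      · exact ⟨hx0, hxA⟩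
      · exact ⟨hmu.trans hxmu, hxA⟩
  rw [setLIntegral_congr hsplit]
  have hdisj : Disjoint (A ∩ Ioo 0 mu) (A ∩ Ioi mu) := by
    rw [Set.disjoint_left]
    rintro x ⟨_, _, h1⟩ ⟨_, h2⟩
    exact absurd h2 (not_lt.2 h1.le)
  rw [lintegral_union (hAs.inter measurableSet_Ioi) hdisj]
  rw [← himm, ← himp]
  have hsIoi : MeasurableSet (s ∩ Ioi 0) := hs.inter measurableSet_Ioi
  rw [ShusterAux.lintegral_image_eq_lintegral_abs_deriv_mul (f' := dm lam mu) hsIoi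
      (fun y hy => (hasDerivAt_hm hlam hmu hy.2).hasDerivWithinAt)
      (fun y1 h1 y2 h2 he => by
        have e1 := g_hm hlam hmu (h1.2 : (0:ℝ) < y1)
        have e2 := g_hm hlam hmu (h2.2 : (0:ℝ) < y2)
        rw [← e1, ← e2, he]),
    ShusterAux.lintegral_image_eq_lintegral_abs_deriv_mul (f' := dp lam mu) hsIoi
      (fun y hy => (hasDerivAt_hp hlam hmu hy.2).hasDerivWithinAt)
      (fun y1 h1 y2 h2 he => by
        have e1 := g_hp hlam hmu (h1.2 : (0:ℝ) < y1)
        have e2 := g_hp hlam hmu (h2.2 : (0:ℝ) < y2)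
        rw [← e1, ← e2, he])]
  -- RHS restriction to positive reals
  have hrhs : ∫⁻ y in s, gammaPDF (1/2) (1/2) y
      = ∫⁻ y in s ∩ Ioi 0, gammaPDF (1/2) (1/2) y := by
    have hu : (s ∩ Ioi 0) ∪ (s ∩ Iic 0) = s := by
      rw [← Set.inter_union_distrib_left, Set.union_comm, Set.Iic_union_Ioi, Set.inter_univ]
    have hdisj2 : Disjoint (s ∩ Ioi (0:ℝ)) (s ∩ Iic 0) := by
      rw [Set.disjoint_left]
      rintro x ⟨_, h1⟩ ⟨_, h2⟩
      exact absurd (Set.mem_Iic.1 h2) (not_le.2 h1)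
    have hzero : ∫⁻ y in s ∩ Iic 0, gammaPDF (1/2) (1/2) y = 0 := by
      rw [setLIntegral_congr_fun (hs.inter measurableSet_Iic)
        (fun y hy => ?_), lintegral_zero]
      rcases lt_or_eq_of_le (Set.mem_Iic.1 hy.2) with h | h
      · exact gammaPDF_of_neg h
      · subst h
        rw [gammaPDF_eq, if_pos le_rfl, Real.zero_rpow (by norm_num : ((1:ℝ)/2 - 1) ≠ 0)]
        simp
    calc ∫⁻ y in s, gammaPDF (1/2) (1/2) y
        = ∫⁻ y in (s ∩ Ioi 0) ∪ (s ∩ Iic 0), gammaPDF (1/2) (1/2) y := by rw [hu]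
      _ = (∫⁻ y in s ∩ Ioi 0, gammaPDF (1/2) (1/2) y)
          + ∫⁻ y in s ∩ Iic 0, gammaPDF (1/2) (1/2) y :=
            lintegral_union (hs.inter measurableSet_Iic) hdisj2
      _ = ∫⁻ y in s ∩ Ioi 0, gammaPDF (1/2) (1/2) y := by rw [hzero, add_zero]
  rw [hrhs]
  have hqm : Measurable fun y => Real.sqrt (ShusterAux.q lam mu y) :=
    Measurable.sqrt (by unfold ShusterAux.q; fun_prop)
  have h1 : Measurable (dm lam mu) := by
    unfold ShusterAux.dm
    exact (measurable_const.mul (hqm.sub (by fun_prop))).div (measurable_const.mul hqm)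
  have h2 : Measurable (hm lam mu) := by
    unfold ShusterAux.hm
    exact ((by fun_prop : Measurable fun y : ℝ => mu*(2*lam+mu*y)).sub
      (hqm.const_mul mu)).div_const (2*lam)
  have hφm : Measurable φ := by
    rw [hφ]
    exact (Measurable.sqrt
        ((measurable_const.div (by fun_prop)) : Measurable fun x : ℝ => lam/(2*Real.pi*x^3))).mul
      (Measurable.exp
        (((by fun_prop : Measurable fun x : ℝ => -(lam*(x-mu)^2)).div
          (by fun_prop : Measurable fun x : ℝ => 2*mu^2*x))))
  have hmeas : Measurable (fun y => ENNReal.ofReal |dm lam mu y|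
      * ENNReal.ofReal (φ (hm lam mu y))) :=
    (Measurable.ennreal_ofReal h1.abs).mul (Measurable.ennreal_ofReal (hφm.comp h2))
  rw [← lintegral_add_left hmeas]
  refine setLIntegral_congr_fun hsIoi (fun y hy => ?_)
  have hy0 : (0:ℝ) < y := hy.2
  rw [gammaPDF]
  rw [hφ]
  simp only []
  rw [← ENNReal.ofReal_mul (abs_nonneg _), ← ENNReal.ofReal_mul (abs_nonneg _),
    ← ENNReal.ofReal_add
      (mul_nonneg (abs_nonneg _) (mul_nonneg (Real.sqrt_nonneg _) (Real.exp_nonneg _)))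
      (mul_nonneg (abs_nonneg _) (mul_nonneg (Real.sqrt_nonneg _) (Real.exp_nonneg _)))]
  congr 1
  have := density_identity hlam hmu hy0
  convert this using 3
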